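/- In the extremal case proof (Claim 1 conclusion): under the hypotheses δ_{k-1}(H) ≥ n/k, 0 < γ ≪ ε, γ(1-1/k-γ)^{k-1} < ε², and n large, for each i ∈ [k] the set A_i := {x ∈ V_i - W_i : e_H(x, W) ≥ ((1-1/k-γ)^{k-1} - ε)n^{k-1}} satisfies |A_i| ≥ (1/k - ε)n. -/

import Mathlib

open Finset

set_option maxHeartbeats 1600000

/-- Claim 1 conclusion: under δ_{k-1}(H) ≥ n/k, 0 < γ ≪ ε,
γ(1-1/k-γ)^{k-1} < ε² and n large, each set
A_i = {x ∈ V_i - W_i : e_H(x,W) ≥ ((1-1/k-γ)^{k-1} - ε)n^{k-1}}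
has |A_i| ≥ (1/k - ε)n. -/
theorem stmt14 (k : ℕ) (hk : 3 ≤ k) (γ ε : ℝ) (hγ0 : 0 < γ) (hγε : γ < ε)
    (h1 : γ * (1 - 1 / (k : ℝ) - γ)^(k - 1) < ε^2) :
    ∃ n0 : ℕ, ∀ n : ℕ, n0 ≤ n →
    ∀ (α : Type) [Fintype α] [DecidableEq α],
    ∀ P : Fin k → Finset α,
    (∀ v : α, ∃! i, v ∈ P i) →
    (∀ i, (P i).card = n) →
    ∀ E : Finset (Finset α),
    (∀ e ∈ E, ∀ i, (e ∩ P i).card = 1) →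
    (∀ S : Finset α, S.card = k - 1 → (∀ i, (S ∩ P i).card ≤ 1) →
      (n : ℝ) / k ≤ ((Finset.univ.filter (fun v => insert v S ∈ E)).card : ℝ)) →
    ∀ W : Finset α, (∀ e ∈ E, ¬ e ⊆ W) →
    (∀ i, (W ∩ P i).card = ⌈(1 - 1 / (k : ℝ) - γ) * n⌉₊) →
    ∀ i : Fin k,
      (1 / (k : ℝ) - ε) * n ≤
        ((((P i) \ W).filter (fun x =>
          ((1 - 1 / (k : ℝ) - γ)^(k - 1) - ε) * (n : ℝ)^(k - 1) ≤
            ((E.filter (fun e => x ∈ e ∧ e \ {x} ⊆ W)).card : ℝ))).card : ℝ) := by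
  classical
  refine ⟨k + ⌈1/γ⌉₊ + 1, ?_⟩
  intro n hn α _ _ P hP hPcard E hE1 hE2 W hWind hWcard i
  have hε0 : 0 < ε := hγ0.trans hγε
  have hkR : (3:ℝ) ≤ (k:ℝ) := by exact_mod_cast hk
  have hk0 : (0:ℝ) < k := by linarith
  have hn0 : (0:ℝ) < n := by exact_mod_cast (by omega : 0 < n)
  have hγn : 1 ≤ γ * n := by
    have h2 : (⌈1/γ⌉₊:ℝ) ≤ (n:ℝ) := by exact_mod_cast (by omega : ⌈1/γ⌉₊ ≤ n)
    have h3 : 1/γ ≤ (n:ℝ) := le_trans (Nat.le_ceil _) h2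
    rw [div_le_iff₀ hγ0] at h3; linarith
  by_cases hεk : 1/(k:ℝ) ≤ ε
  · exact le_trans (by nlinarith) (Nat.cast_nonneg _)
  push_neg at hεk
  have hγk : γ < 1/(k:ℝ) := lt_trans hγε hεk
  have hkinv : 1/(k:ℝ) ≤ 1/3 := by
    rw [div_le_div_iff₀ hk0 (by norm_num)]; linarith
  set c : ℝ := 1 - 1/(k:ℝ) - γ with hcdef
  have hc0 : 0 < c := by rw [hcdef]; linarith
  set m := ⌈c * (n:ℝ)⌉₊ with hmdef
  have hm1 : c * n ≤ (m:ℝ) := Nat.le_ceil _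
  have hm2 : (m:ℝ) ≤ c * n + 1 := by
    have := Nat.ceil_lt_add_one (by positivity : (0:ℝ) ≤ c * n)
    rw [hmdef]; linarith
  have hmn : m ≤ n := by
    calc m = (W ∩ P i).card := (hWcard i).symm
    _ ≤ (P i).card := card_le_card inter_subset_right
    _ = n := hPcard i
  -- partition uniqueness
  have hdisj : ∀ v (j j' : Fin k), v ∈ P j → v ∈ P j' → j = j' := by
    intro v j j' hj hj'
    obtain ⟨w, -, hu⟩ := hP v
    rw [hu j hj, hu j' hj']
  set T : Finset (Fin k) := Finset.univ.erase i with hTdef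
  have hTmem : ∀ j, j ∈ T ↔ j ≠ i := by intro j; simp [hTdef]
  have hTcard : T.card = k - 1 := by
    rw [hTdef, card_erase_of_mem (mem_univ i), card_univ, Fintype.card_fin]
  set PI := T.pi (fun j => W ∩ P j) with hPIdef
  have hPIcard : PI.card = m ^ (k-1) := by
    rw [hPIdef, Finset.card_pi]
    rw [Finset.prod_congr rfl fun j _ => hWcard j]
    rw [Finset.prod_const, hTcard]
  set Sf : (∀ j ∈ T, α) → Finset α := fun f => T.attach.image fun j => f j.1 j.2 with hSfdef
  have hmemPI : ∀ f ∈ PI, ∀ j (hj : j ∈ T), f j hj ∈ W ∩ P j := by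
    intro f hf; rwa [hPIdef, Finset.mem_pi] at hf
  have hSfsub : ∀ f ∈ PI, Sf f ⊆ W := by
    intro f hf y hy
    rw [hSfdef] at hy
    simp only [mem_image, mem_attach, true_and, Subtype.exists] at hy
    obtain ⟨j, hj, rfl⟩ := hy
    exact (mem_inter.mp (hmemPI f hf j hj)).1
  have hSfPj : ∀ f ∈ PI, ∀ j (hj : j ∈ T), Sf f ∩ P j = {f j hj} := by
    intro f hf j hj
    ext y
    simp only [mem_inter, mem_singleton, hSfdef, mem_image, mem_attach, true_and, Subtype.exists]
    constructor
    · rintro ⟨⟨j', hj', rfl⟩, hyP⟩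
      have h1' := mem_inter.mp (hmemPI f hf j' hj')
      have hjj : j = j' := hdisj _ j j' hyP h1'.2
      subst hjj; rfl
    · rintro rfl
      exact ⟨⟨j, hj, rfl⟩, (mem_inter.mp (hmemPI f hf j hj)).2⟩
  have hSfPi : ∀ f ∈ PI, Sf f ∩ P i = ∅ := by
    intro f hf
    rw [eq_empty_iff_forall_notMem]
    intro y hy
    obtain ⟨hy1, hy2⟩ := mem_inter.mp hy
    rw [hSfdef] at hy1
    simp only [mem_image, mem_attach, true_and, Subtype.exists] at hy1
    obtain ⟨j, hj, rfl⟩ := hy1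
    exact ((hTmem j).mp hj) (hdisj _ j i (mem_inter.mp (hmemPI f hf j hj)).2 hy2)
  have hSfcard : ∀ f ∈ PI, (Sf f).card = k - 1 := by
    intro f hf
    rw [hSfdef]
    rw [Finset.card_image_of_injOn, card_attach, hTcard]
    rintro ⟨j1, h1'⟩ - ⟨j2, h2'⟩ - heq
    simp only at heq
    have e1 := (mem_inter.mp (hmemPI f hf j1 h1')).2
    have e2 := (mem_inter.mp (hmemPI f hf j2 h2')).2
    rw [heq] at e1
    exact Subtype.ext (hdisj _ j1 j2 e1 e2)
  have hSflegal : ∀ f ∈ PI, ∀ j, (Sf f ∩ P j).card ≤ 1 := by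
    intro f hf j
    by_cases hj : j ∈ T
    · rw [hSfPj f hf j hj]; simp
    · have hji : j = i := by by_contra h; exact hj ((hTmem j).mpr h)
      rw [hji, hSfPi f hf]; simp
  have hdeg : ∀ f ∈ PI, (n:ℝ)/k ≤ ((Finset.univ.filter fun v => insert v (Sf f) ∈ E).card : ℝ) :=
    fun f hf => hE2 (Sf f) (hSfcard f hf) (hSflegal f hf)
  have hedge : ∀ f ∈ PI, ∀ v : α, insert v (Sf f) ∈ E →
      v ∈ P i \ W ∧ v ∉ Sf f ∧ (insert v (Sf f)) \ {v} ⊆ W := by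
    intro f hf v he
    have hvW : v ∉ W := by
      intro hvW
      exact hWind _ he (insert_subset hvW (hSfsub f hf))
    have hvSf : v ∉ Sf f := fun h => hvW (hSfsub f hf h)
    have hvPi : v ∈ P i := by
      obtain ⟨y, hy⟩ := Finset.card_eq_one.mp (hE1 _ he i)
      have hyy : y ∈ insert v (Sf f) ∩ P i := hy ▸ mem_singleton_self y
      obtain ⟨hy1, hy2⟩ := mem_inter.mp hyy
      rcases mem_insert.mp hy1 with rfl | hy3
      · exact hy2
      · exact absurd (mem_inter.mpr ⟨hy3, hy2⟩) (by rw [hSfPi f hf]; exact notMem_empty y)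
    refine ⟨mem_sdiff.mpr ⟨hvPi, hvW⟩, hvSf, ?_⟩
    rw [Finset.sdiff_singleton_eq_erase, Finset.erase_insert hvSf]
    exact hSfsub f hf
  have hSfinj : ∀ f ∈ PI, ∀ g ∈ PI, Sf f = Sf g → f = g := by
    intro f hf g hg hfg
    funext j hj
    have h1' : Sf f ∩ P j = {f j hj} := hSfPj f hf j hj
    have h2' : Sf g ∩ P j = {g j hj} := hSfPj g hg j hj
    rw [hfg, h2'] at h1'
    exact (Finset.singleton_inj.mp h1').symm
  have hA3 : ∑ f ∈ PI, (Finset.univ.filter fun v => insert v (Sf f) ∈ E).card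
      ≤ ∑ x ∈ (P i) \ W, (E.filter fun e => x ∈ e ∧ e \ {x} ⊆ W).card := by
    rw [← Finset.card_sigma, ← Finset.card_sigma]
    apply Finset.card_le_card_of_injOn (fun p => ⟨p.2, insert p.2 (Sf p.1)⟩)
    · rintro ⟨f, v⟩ hp
      rw [Finset.mem_coe, Finset.mem_sigma] at hp
      obtain ⟨hf, hv⟩ := hp
      have he : insert v (Sf f) ∈ E := (Finset.mem_filter.mp hv).2
      obtain ⟨h1', h2', h3'⟩ := hedge f hf v he
      rw [Finset.mem_coe, Finset.mem_sigma]
      exact ⟨h1', Finset.mem_filter.mpr ⟨he, mem_insert_self _ _, h3'⟩⟩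
    · rintro ⟨f, v⟩ hp ⟨g, w⟩ hq heq
      simp only [Finset.mem_coe, Finset.mem_sigma, Finset.mem_filter] at hp hq
      have hv : insert v (Sf f) ∈ E := hp.2.2
      have hw : insert w (Sf g) ∈ E := hq.2.2
      have hveq : v = w := congrArg (fun p => p.1) heq
      subst hveq
      have h2'' : insert v (Sf f) = insert v (Sf g) := congrArg (fun p => p.2) heq
      have hvf : v ∉ Sf f := (hedge f hp.1 v hv).2.1
      have hvg : v ∉ Sf g := (hedge g hq.1 v hw).2.1
      have hSS : Sf f = Sf g := by
        rw [← Finset.erase_insert hvf, ← Finset.erase_insert hvg, h2'']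
      have := hSfinj f hp.1 g hq.1 hSS
      subst this
      rfl
  have hA1 : (m:ℝ)^(k-1) * ((n:ℝ)/k)
      ≤ ∑ f ∈ PI, ((Finset.univ.filter fun v => insert v (Sf f) ∈ E).card : ℝ) := by
    have h := Finset.card_nsmul_le_sum PI
      (fun f => ((Finset.univ.filter fun v => insert v (Sf f) ∈ E).card : ℝ)) ((n:ℝ)/k) hdeg
    rwa [nsmul_eq_mul, hPIcard, Nat.cast_pow] at h
  have hsum1 : (m:ℝ)^(k-1) * ((n:ℝ)/k)
      ≤ ∑ x ∈ (P i) \ W, ((E.filter (fun e => x ∈ e ∧ e \ {x} ⊆ W)).card : ℝ) := by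
    refine hA1.trans ?_
    rw [← Nat.cast_sum, ← Nat.cast_sum]
    exact_mod_cast hA3
  have hD : ∀ x ∈ (P i) \ W, (E.filter (fun e => x ∈ e ∧ e \ {x} ⊆ W)).card ≤ m ^ (k-1) := by
    intro x hx
    obtain ⟨hxP, hxW⟩ := mem_sdiff.mp hx
    rw [← hPIcard]
    set F : Finset α → (∀ j ∈ T, α) := fun e j _ => if h : (e ∩ P j).Nonempty then h.choose else x with hFdef
    have hFmem : ∀ e ∈ E.filter (fun e => x ∈ e ∧ e \ {x} ⊆ W), ∀ j (hj : j ∈ T), F e j hj ∈ e ∩ P j := by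
      intro e he j hj
      rw [mem_filter] at he
      have h1' : (e ∩ P j).Nonempty := Finset.card_pos.mp (by rw [hE1 e he.1 j]; norm_num)
      rw [hFdef]; dsimp only; rw [dif_pos h1']
      exact h1'.choose_spec
    have hFPI : ∀ e ∈ E.filter (fun e => x ∈ e ∧ e \ {x} ⊆ W), F e ∈ PI := by
      intro e he
      rw [hPIdef, Finset.mem_pi]
      intro j hj
      obtain ⟨h2a, h2b⟩ := mem_inter.mp (hFmem e he j hj)
      refine mem_inter.mpr ⟨?_, h2b⟩
      apply (mem_filter.mp he).2.2
      refine mem_sdiff.mpr ⟨h2a, ?_⟩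
      rw [mem_singleton]
      intro hEq
      exact ((hTmem j).mp hj) (hdisj _ j i (hEq ▸ h2b) hxP)
    have hrec : ∀ e ∈ E.filter (fun e => x ∈ e ∧ e \ {x} ⊆ W), e = insert x (Sf (F e)) := by
      intro e he
      obtain ⟨heE, hxe, hew⟩ := mem_filter.mp he
      apply Finset.Subset.antisymm
      · intro y hy
        obtain ⟨j, hyj, -⟩ := hP y
        by_cases hji : j = i
        · subst hji
          obtain ⟨z, hz⟩ := Finset.card_eq_one.mp (hE1 e heE j)
          have hxz : x = z := by
            have hh : x ∈ e ∩ P j := mem_inter.mpr ⟨hxe, hxP⟩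
            rw [hz] at hh; exact mem_singleton.mp hh
          have hyz : y = z := by
            have hh : y ∈ e ∩ P j := mem_inter.mpr ⟨hy, hyj⟩
            rw [hz] at hh; exact mem_singleton.mp hh
          rw [mem_insert]; left; rw [hyz, ← hxz]
        · have hjT : j ∈ T := (hTmem j).mpr hji
          obtain ⟨z, hz⟩ := Finset.card_eq_one.mp (hE1 e heE j)
          have h2' := hFmem e he j hjT
          rw [hz, mem_singleton] at h2'
          have h3' : y ∈ e ∩ P j := mem_inter.mpr ⟨hy, hyj⟩
          rw [hz, mem_singleton] at h3'
          rw [mem_insert]; right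
          rw [h3', ← h2']
          rw [hSfdef]
          exact mem_image.mpr ⟨⟨j, hjT⟩, mem_attach _ _, rfl⟩
      · rw [Finset.insert_subset_iff]
        refine ⟨hxe, ?_⟩
        intro y hy
        rw [hSfdef] at hy
        simp only [mem_image, mem_attach, true_and, Subtype.exists] at hy
        obtain ⟨j, hj, rfl⟩ := hy
        exact (mem_inter.mp (hFmem e he j hj)).1
    apply Finset.card_le_card_of_injOn F hFPI
    intro e1 he1 e2 he2 heq
    rw [Finset.mem_coe] at he1 he2
    rw [hrec e1 he1, hrec e2 he2, heq]
  -- assemble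
  set A := ((P i) \ W).filter (fun x => (c^(k-1) - ε) * (n:ℝ)^(k-1) ≤
      ((E.filter (fun e => x ∈ e ∧ e \ {x} ⊆ W)).card : ℝ)) with hAdef
  set B := ((P i) \ W).filter (fun x => ¬((c^(k-1) - ε) * (n:ℝ)^(k-1) ≤
      ((E.filter (fun e => x ∈ e ∧ e \ {x} ⊆ W)).card : ℝ))) with hBdef
  have hsplit := Finset.sum_filter_add_sum_filter_not ((P i) \ W)
      (fun x => (c^(k-1) - ε) * (n:ℝ)^(k-1) ≤
        ((E.filter (fun e => x ∈ e ∧ e \ {x} ⊆ W)).card : ℝ))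
      (fun x => ((E.filter (fun e => x ∈ e ∧ e \ {x} ⊆ W)).card : ℝ))
  rw [← hAdef, ← hBdef] at hsplit
  have hApart : ∑ x ∈ A, ((E.filter (fun e => x ∈ e ∧ e \ {x} ⊆ W)).card : ℝ)
      ≤ (A.card:ℝ) * (m:ℝ)^(k-1) := by
    have h := Finset.sum_le_card_nsmul A
      (fun x => ((E.filter (fun e => x ∈ e ∧ e \ {x} ⊆ W)).card : ℝ)) ((m:ℝ)^(k-1))
      (fun x hx => by
        rw [hAdef, mem_filter] at hx
        show ((E.filter (fun e => x ∈ e ∧ e \ {x} ⊆ W)).card : ℝ) ≤ (m:ℝ)^(k-1)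
        exact_mod_cast hD x hx.1)
    rwa [nsmul_eq_mul] at h
  have hBpart : ∑ x ∈ B, ((E.filter (fun e => x ∈ e ∧ e \ {x} ⊆ W)).card : ℝ)
      ≤ (B.card:ℝ) * ((c^(k-1) - ε) * (n:ℝ)^(k-1)) := by
    have h := Finset.sum_le_card_nsmul B
      (fun x => ((E.filter (fun e => x ∈ e ∧ e \ {x} ⊆ W)).card : ℝ))
      ((c^(k-1) - ε) * (n:ℝ)^(k-1))
      (fun x hx => by
        rw [hBdef, mem_filter] at hx
        exact (not_le.mp hx.2).le)
    rwa [nsmul_eq_mul] at h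
  have hcardPiW : ((P i) \ W).card = n - m := by
    have h7 : (P i) \ W = (P i) \ ((P i) ∩ W) := (Finset.sdiff_inter_self_left _ _).symm
    rw [h7, card_sdiff_of_subset inter_subset_left, hPcard i, Finset.inter_comm, hWcard i]
  have hcards : (A.card:ℝ) + (B.card:ℝ) = (n:ℝ) - m := by
    have h8 := Finset.card_filter_add_card_filter_not (s := (P i) \ W)
      (p := fun x => (c^(k-1) - ε) * (n:ℝ)^(k-1) ≤
        ((E.filter (fun e => x ∈ e ∧ e \ {x} ⊆ W)).card : ℝ))
    rw [← hAdef, ← hBdef, hcardPiW] at h8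
    have := congrArg (Nat.cast : ℕ → ℝ) h8
    push_cast [Nat.cast_sub hmn] at this
    linarith
  have hkeyR : (m:ℝ)^(k-1)*((n:ℝ)/k)
      ≤ (A.card:ℝ)*(m:ℝ)^(k-1) + (B.card:ℝ)*((c^(k-1) - ε) * (n:ℝ)^(k-1)) := by
    calc (m:ℝ)^(k-1)*((n:ℝ)/k)
        ≤ ∑ x ∈ (P i) \ W, ((E.filter (fun e => x ∈ e ∧ e \ {x} ⊆ W)).card : ℝ) := hsum1
      _ = _ + _ := hsplit.symm
      _ ≤ _ := add_le_add hApart hBpart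
  -- goal is about A
  show (1/(k:ℝ) - ε) * n ≤ (A.card : ℝ)
  by_cases hCe : 0 < c^(k-1) - ε
  · -- main case
    by_contra hgoal
    push_neg at hgoal
    have hN0 : (0:ℝ) < (n:ℝ)^(k-1) := by positivity
    have hC0 : (0:ℝ) < c^(k-1) := by positivity
    have hCN : c^(k-1) * (n:ℝ)^(k-1) ≤ (m:ℝ)^(k-1) := by
      rw [← mul_pow]; exact pow_le_pow_left₀ (by positivity) hm1 _
    have hMt : 0 < (m:ℝ)^(k-1) - (c^(k-1) - ε)*(n:ℝ)^(k-1) := by nlinarith [mul_pos hε0 hN0]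
    have hBc : (B.card:ℝ) = (n:ℝ) - m - A.card := by linarith
    rw [hBc] at hkeyR
    have h' := mul_lt_mul_of_pos_right hgoal hMt
    have e1 : ε*(n:ℝ)*(m:ℝ)^(k-1)
        < (c^(k-1)-ε)*(n:ℝ)^(k-1)*(((n:ℝ)-m) - (1/(k:ℝ)-ε)*n) := by
      have hk' : (n:ℝ)/k = (1/(k:ℝ))*n := by ring
      rw [hk'] at hkeyR
      linarith [hkeyR, h']
    have e2 : ((n:ℝ)-m) - (1/(k:ℝ)-ε)*n ≤ (γ+ε)*n := by
      rw [hcdef] at hm1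
      have h5 : 0 ≤ ε * n := mul_nonneg hε0.le hn0.le
      linarith
    have htpos : (0:ℝ) < (c^(k-1)-ε)*(n:ℝ)^(k-1) := mul_pos hCe hN0
    have e3 : (c^(k-1)-ε)*(n:ℝ)^(k-1)*(((n:ℝ)-m)-(1/(k:ℝ)-ε)*n)
        ≤ (c^(k-1)-ε)*(n:ℝ)^(k-1)*((γ+ε)*n) := mul_le_mul_of_nonneg_left e2 htpos.le
    have e4 : (c^(k-1)-ε)*(γ+ε) < ε*c^(k-1) := by nlinarith [mul_pos hγ0 hε0]
    have e5 : (c^(k-1)-ε)*(n:ℝ)^(k-1)*((γ+ε)*n) < ε*c^(k-1)*((n:ℝ)^(k-1)*n) := by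
      have h'' := mul_lt_mul_of_pos_right e4 (mul_pos hN0 hn0)
      linarith [h'']
    have e6 : ε*c^(k-1)*((n:ℝ)^(k-1)*n) ≤ ε*(n:ℝ)*(m:ℝ)^(k-1) := by
      have h'' := mul_le_mul_of_nonneg_left hCN (mul_pos hε0 hn0).le
      linarith [h'']
    linarith
  · -- degenerate case : threshold nonpositive
    push_neg at hCe
    have hBempty : B = ∅ := by
      rw [hBdef, Finset.filter_eq_empty_iff]
      intro x _
      rw [not_not]
      refine le_trans ?_ (Nat.cast_nonneg _)
      exact mul_nonpos_of_nonpos_of_nonneg hCe (by positivity)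
    have hAc : (A.card:ℝ) = (n:ℝ) - m := by
      rw [hBempty] at hcards; simpa using hcards
    rw [hAc, hcdef] at *
    nlinarith [mul_nonneg hε0.le hn0.le]
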